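/- Path interception implies causal irrelevance: let M be a structural causal model over a finite directed acyclic graph G, and let X, Y, Z be disjoint sets of variables such that every directed path from a node of X to a node of Y in G contains at least one node of Z. Then X is causally irrelevant to Y given Z: for every set W disjoint from X ∪ Y ∪ Z, every exogenous setting ε, every value z of Z, every pair of values x, x' of X, and every value w of W, the potential responses satisfy Y_{x,z,w}(ε) = Y_{x',z,w}(ε). -/

import Mathlib

attribute [local instance] Classical.propDecidable

noncomputable section

/-! ### Structural causal models -/

/-- A structural causal model over a finite DAG: finite nonempty domains, one
finite-domain exogenous variable per variable, structural functions, and mutually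
independent exogenous distributions. -/
structure SCM (V : Type) where
  edge : V → V → Prop
  acyclic : ∀ v, ¬ Relation.TransGen edge v v
  dom : V → Type
  dom_fintype : ∀ v, Fintype (dom v)
  dom_nonempty : ∀ v, Nonempty (dom v)
  edom : V → Type
  edom_fintype : ∀ v, Fintype (edom v)
  edom_nonempty : ∀ v, Nonempty (edom v)
  f : ∀ v, (∀ w, edge w v → dom w) → edom v → dom v
  μ : ∀ v, edom v → ℝ
  μ_nonneg : ∀ v e, 0 ≤ μ v e
  μ_sum : ∀ v, ∑ e ∈ @Finset.univ (edom v) (edom_fintype v), μ v e = 1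

namespace SCM

variable {V : Type} [Fintype V] (M : SCM V)

/-- The type of structural mechanisms for the vertex `v`. -/
def Mechanism (v : V) : Type := (∀ w, M.edge w v → M.dom w) → M.edom v → M.dom v

theorem edge_wf : WellFounded M.edge := by
  haveI : IsTrans V (Relation.TransGen M.edge) := ⟨fun _ _ _ h h' => h.trans h'⟩
  haveI : IsIrrefl V (Relation.TransGen M.edge) := ⟨M.acyclic⟩
  exact Subrelation.wf (fun h => Relation.TransGen.single h)
    (Finite.wellFounded_of_trans_of_irrefl _)

/-- The unique solution of the structural equations `mech` given exogenous setting `ε`. -/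
def solve (mech : ∀ v, M.Mechanism v) (ε : ∀ v, M.edom v) : ∀ v, M.dom v :=
  WellFounded.fix (C := fun v => M.dom v) M.edge_wf
    (fun v IH => mech v (fun w hw => IH w hw) (ε v))

/-- Mechanisms after applying an intervention, given as a partial assignment `ι`:
intervened variables are set to constants, others follow their structural function. -/
def doMech (ι : ∀ v, Option (M.dom v)) : ∀ v, M.Mechanism v :=
  fun v => match ι v with
    | some x => fun _ _ => x
    | none => M.f v

/-- The potential response `·_ι(ε)`: values of the variables in the submodel given by
the intervention `ι`. -/
def valDo (ι : ∀ v, Option (M.dom v)) (ε : ∀ v, M.edom v) : ∀ v, M.dom v :=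
  M.solve (M.doMech ι) ε

/-- The intervention setting the variables of the set `S` to the values `s`. -/
def assign (S : Set V) (s : ∀ v ∈ S, M.dom v) : ∀ v, Option (M.dom v) :=
  fun v => if h : v ∈ S then some (s v h) else none

/-- Combination of two partial assignments (the first takes precedence). -/
def orItv (ι₁ ι₂ : ∀ v, Option (M.dom v)) : ∀ v, Option (M.dom v) :=
  fun v => (ι₁ v).orElse fun _ => ι₂ v

end SCM

theorem SCM.solve_eq {V : Type} [Fintype V] (M : SCM V) (mech : ∀ v, M.Mechanism v)
    (ε : ∀ v, M.edom v) (v : V) :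
    M.solve mech ε v = mech v (fun u _ => M.solve mech ε u) (ε v) := by
  unfold SCM.solve
  rw [WellFounded.fix_eq]

/-- **Path interception implies causal irrelevance**: if every directed path from `X` to
`Y` in the graph of the SCM `M` passes through `Z`, then `X` is causally irrelevant to
`Y` given `Z`: for every set `W` disjoint from `X ∪ Y ∪ Z`, all exogenous settings `ε`,
all values `z`, `w` and all pairs of values `x`, `x'`, the potential responses of every
node of `Y` under `do(X=x, Z=z, W=w)` and `do(X=x', Z=z, W=w)` coincide. -/
theorem path_interception_implies_causal_irrelevance
    {V : Type} [Fintype V] (M : SCM V) (X Y Z : Set V)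
    (hXY : Disjoint X Y) (hXZ : Disjoint X Z) (hYZ : Disjoint Y Z)
    (hint : ∀ p : List V, p.Chain' M.edge →
      (∃ a ∈ X, p.head? = some a) → (∃ b ∈ Y, p.getLast? = some b) →
      ∃ z ∈ Z, z ∈ p) :
    ∀ W : Set V, Disjoint W (X ∪ Y ∪ Z) →
      ∀ (ε : ∀ v, M.edom v) (x x' : ∀ v ∈ X, M.dom v)
        (z : ∀ v ∈ Z, M.dom v) (w : ∀ v ∈ W, M.dom v),
        ∀ y ∈ Y,
          M.valDo (M.orItv (M.assign X x) (M.orItv (M.assign Z z) (M.assign W w))) ε y =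
            M.valDo (M.orItv (M.assign X x') (M.orItv (M.assign Z z) (M.assign W w))) ε y := by
  intro W hW ε x x' z w y hy
  set rest := M.orItv (M.assign Z z) (M.assign W w) with hrest
  set ι₁ := M.orItv (M.assign X x) rest with hι₁
  set ι₂ := M.orItv (M.assign X x') rest with hι₂
  -- interceptedness predicate
  set I : V → Prop := fun v => ∀ p : List V, p.Chain' M.edge →
      (∃ a ∈ X, p.head? = some a) → p.getLast? = some v → ∃ zz ∈ Z, zz ∈ p with hI
  have hιeq : ∀ u, u ∉ X → ι₁ u = ι₂ u := by
    intro u hu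
    simp [hι₁, hι₂, SCM.orItv, SCM.assign, hu]
  have main : ∀ v : V, (v ∈ Z ∪ W ∨ I v) →
      M.valDo ι₁ ε v = M.valDo ι₂ ε v := by
    intro v
    induction v using M.edge_wf.induction with
    | _ v IH =>
      intro hv
      by_cases hvX : v ∈ X
      · -- contradiction: singleton path
        exfalso
        have hvZW : v ∉ Z ∪ W := by
          intro h
          rcases h with h | h
          · exact hXZ.ne_of_mem hvX h rfl
          · exact hW.ne_of_mem h (Or.inl (Or.inl hvX)) rfl
        have hIv : I v := hv.resolve_left hvZW
        obtain ⟨zz, hzz, hzzmem⟩ := hIv [v] (List.isChain_singleton v) ⟨v, hvX, rfl⟩ (by simp)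
        have : zz = v := by simpa using hzzmem
        exact hXZ.ne_of_mem hvX hzz this.symm
      · have heq : ι₁ v = ι₂ v := hιeq v hvX
        by_cases hvZW : rest v = none
        · -- not intervened: v ∉ Z ∪ W
          have hvZ : v ∉ Z := by
            intro h
            simp [hrest, SCM.orItv, SCM.assign, h] at hvZW
          have hvW : v ∉ W := by
            intro h
            simp only [hrest, SCM.orItv, SCM.assign, Option.orElse] at hvZW
            split at hvZW <;> simp [h] at hvZW
          have hι₁v : ι₁ v = none := by
            simp [hι₁, SCM.orItv, SCM.assign, hvX, hvZW]
          have hι₂v : ι₂ v = none := heq ▸ hι₁v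
          have hIv : I v := by
            refine hv.resolve_left ?_
            rintro (h | h)
            exacts [hvZ h, hvW h]
          have hmech₁ : M.doMech ι₁ v = M.f v := by
            unfold SCM.doMech; rw [hι₁v]
          have hmech₂ : M.doMech ι₂ v = M.f v := by
            unfold SCM.doMech; rw [hι₂v]
          unfold SCM.valDo
          rw [M.solve_eq, M.solve_eq, hmech₁, hmech₂]
          congr 1
          funext u hu
          refine IH u hu ?_
          by_cases huZW : u ∈ Z ∪ W
          · exact Or.inl huZW
          · refine Or.inr ?_
            intro p hp hhead hlast
            have hpne : p ≠ [] := by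
              intro h; rw [h] at hlast; simp at hlast
            have hchain : (p ++ [v]).Chain' M.edge := by
              rw [show (p ++ [v]).Chain' M.edge ↔ _ from List.isChain_append]
              refine ⟨hp, by simp, ?_⟩
              intro a ha b hb
              simp at hb
              subst hb
              rw [hlast] at ha
              simp at ha
              subst ha
              exact hu
            obtain ⟨zz, hzz, hzzmem⟩ := hIv (p ++ [v]) hchain
              (by rwa [List.head?_append_of_ne_nil _ hpne])
              (by simp)
            refine ⟨zz, hzz, ?_⟩
            rcases List.mem_append.1 hzzmem with h | h
            · exact h
            · exfalso
              have : zz = v := by simpa using h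
              exact hvZ (this ▸ hzz)
        · -- intervened: both constant
          obtain ⟨c, hc⟩ := Option.ne_none_iff_exists'.1 hvZW
          have hι₁v : ι₁ v = some c := by
            simp [hι₁, SCM.orItv, SCM.assign, hvX, hc]
          have hι₂v : ι₂ v = some c := heq ▸ hι₁v
          have hmech₁ : M.doMech ι₁ v = fun _ _ => c := by
            unfold SCM.doMech; rw [hι₁v]
          have hmech₂ : M.doMech ι₂ v = fun _ _ => c := by
            unfold SCM.doMech; rw [hι₂v]
          unfold SCM.valDo
          rw [M.solve_eq, M.solve_eq, hmech₁, hmech₂]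
  refine main y (Or.inr ?_)
  intro p hp hhead hlast
  exact hint p hp hhead ⟨y, hy, hlast⟩

end
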